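/- Let N ≥ 3 be an integer, α ∈ (0,N), θ with α < θ < N, and τ > N. Let f : ℝ^N\{0} → ℝ be a nonnegative measurable function satisfying f(x) ≤ |x|^{-θ}(1+|x|)^{θ-τ} for all x ≠ 0. Then there exists c > 0 such that ∫_{ℝ^N} f(y) |x-y|^{α-N} dy ≤ c |x|^{α-θ}(1+|x|)^{θ-N} for every x ∈ ℝ^N\{0}. -/

import Mathlib

open Real MeasureTheory Filter Metric Set
open scoped ENNReal NNReal

noncomputable section
set_option maxHeartbeats 1000000

section RieszAux


variable {N : ℕ}

local notation "E" => EuclideanSpace ℝ (Fin N)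

lemma finrank_E : Module.finrank ℝ (EuclideanSpace ℝ (Fin N)) = N := by
  simp [finrank_euclideanSpace]

lemma lintegral_fun_norm (hN : 1 ≤ N) (f : ℝ → ℝ≥0∞) (hf : Measurable f) :
    ∫⁻ x : E, f ‖x‖ = (N : ℝ≥0∞) * volume (ball (0:E) 1) *
      ∫⁻ r in Ioi (0:ℝ), ENNReal.ofReal (r ^ (N-1)) * f r := by
  have : Nontrivial (EuclideanSpace ℝ (Fin N)) := by
    have h1 : 0 < Module.finrank ℝ (EuclideanSpace ℝ (Fin N)) := by rw [finrank_E]; exact hN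
    exact Module.nontrivial_of_finrank_pos (R := ℝ) h1
  set μ : Measure E := volume with hμ
  calc ∫⁻ x : E, f ‖x‖ ∂μ
      = ∫⁻ x : ({(0:E)}ᶜ : Set E), f ‖(x:E)‖ ∂(μ.comap (↑)) := by
        rw [lintegral_subtype_comap (measurableSet_singleton _).compl (fun x => f ‖x‖),
          MeasureTheory.restrict_compl_singleton]
    _ = ∫⁻ p : (Metric.sphere (0:E) 1) × Ioi (0:ℝ), f p.2
          ∂(μ.toSphere.prod (.volumeIoiPow (Module.finrank ℝ (EuclideanSpace ℝ (Fin N)) - 1))) := by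
        refine Eq.trans ?_ (μ.measurePreserving_homeomorphUnitSphereProd.lintegral_comp
          ((hf.comp measurable_subtype_coe).comp measurable_snd))
        congr 1; funext x; simp [Function.comp_def]
    _ = μ.toSphere univ * ∫⁻ r, f r ∂(Measure.volumeIoiPow (Module.finrank ℝ (EuclideanSpace ℝ (Fin N)) - 1)) := by
        rw [MeasureTheory.lintegral_prod (fun p : (Metric.sphere (0:E) 1) × Ioi (0:ℝ) => f p.2) (((hf.comp measurable_subtype_coe).comp measurable_snd).aemeasurable)]
        simp [lintegral_const, mul_comm]
    _ = (N : ℝ≥0∞) * volume (ball (0:E) 1) *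
          ∫⁻ r in Ioi (0:ℝ), ENNReal.ofReal (r ^ (N-1)) * f r := by
        rw [Measure.toSphere_apply_univ, finrank_E]
        congr 1
        rw [Measure.volumeIoiPow,
          lintegral_withDensity_eq_lintegral_mul _
            (by fun_prop) (g := fun r : Ioi (0:ℝ) => f r) (hf.comp measurable_subtype_coe)]
        simp only [Pi.mul_apply]
        exact lintegral_subtype_comap measurableSet_Ioi
          (fun r : ℝ => ENNReal.ofReal (r ^ (N-1)) * f r)

lemma aux_Ioo (hN : 1 ≤ N) {b s : ℝ} (hb : -(N:ℝ) < b) (hs : 0 < s) :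
    ∫⁻ r in Ioo (0:ℝ) s, ENNReal.ofReal (r ^ (N-1)) * ENNReal.ofReal (r ^ b) =
      ENNReal.ofReal (s ^ ((N:ℝ) + b) / ((N:ℝ) + b)) := by
  have hc : ((N:ℝ) - 1) + b > -1 := by linarith
  have hcast : (((N-1 : ℕ)) : ℝ) = (N:ℝ) - 1 := by
    rw [Nat.cast_sub hN]; norm_num
  have h1 : ∀ r ∈ Ioo (0:ℝ) s, ENNReal.ofReal (r ^ (N-1)) * ENNReal.ofReal (r ^ b)
      = ENNReal.ofReal (r ^ (((N:ℝ) - 1) + b)) := by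
    intro r hr
    rw [← ENNReal.ofReal_mul (pow_nonneg hr.1.le _)]
    congr 1
    rw [← Real.rpow_natCast r (N-1), hcast, ← Real.rpow_add hr.1]
  rw [setLIntegral_congr_fun measurableSet_Ioo h1]
  have hint : IntegrableOn (fun r : ℝ => r ^ (((N:ℝ) - 1) + b)) (Ioo 0 s) := by
    have h2 : IntervalIntegrable (fun r : ℝ => r ^ (((N:ℝ) - 1) + b)) volume 0 s :=
      intervalIntegral.intervalIntegrable_rpow' hc
    exact ((intervalIntegrable_iff_integrableOn_Ioc_of_le hs.le).1 h2).mono_set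
      Ioo_subset_Ioc_self
  rw [← ofReal_integral_eq_lintegral_ofReal hint ?_]
  · congr 1
    rw [Measure.restrict_congr_set Ioo_ae_eq_Ioc, ← intervalIntegral.integral_of_le hs.le,
      integral_rpow (Or.inl hc), Real.zero_rpow (by linarith)]
    ring_nf
  · filter_upwards [ae_restrict_mem measurableSet_Ioo] with r hr
    exact Real.rpow_nonneg hr.1.le _

lemma lintegral_rpow_ball (hN : 1 ≤ N) {b s : ℝ} (hb : -(N:ℝ) < b) (hs : 0 < s) :
    ∫⁻ y in ball (0:E) s, ENNReal.ofReal (‖y‖ ^ b) =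
      (N : ℝ≥0∞) * volume (ball (0:E) 1) * ENNReal.ofReal (s ^ ((N:ℝ) + b) / ((N:ℝ) + b)) := by
  have hmg : Measurable (fun r : ℝ => ENNReal.ofReal (r ^ b)) := by fun_prop
  have hmf : Measurable ((Iio s).indicator (fun r : ℝ => ENNReal.ofReal (r ^ b))) :=
    hmg.indicator measurableSet_Iio
  rw [← lintegral_indicator measurableSet_ball]
  have h1 : ∀ y : E, (ball (0:E) s).indicator (fun y => ENNReal.ofReal (‖y‖ ^ b)) y
      = (Iio s).indicator (fun r : ℝ => ENNReal.ofReal (r ^ b)) ‖y‖ := by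
    intro y
    by_cases h : ‖y‖ < s <;> simp [indicator, mem_ball_zero_iff, h]
  simp_rw [h1]
  rw [lintegral_fun_norm hN _ hmf]
  congr 1
  have h2 : ∀ r : ℝ, ENNReal.ofReal (r ^ (N-1)) * (Iio s).indicator
        (fun r : ℝ => ENNReal.ofReal (r ^ b)) r
      = (Iio s).indicator (fun r : ℝ => ENNReal.ofReal (r ^ (N-1)) * ENNReal.ofReal (r ^ b)) r := by
    intro r
    by_cases h : r ∈ Iio s <;> simp [indicator, h]
  simp_rw [h2]
  rw [lintegral_indicator measurableSet_Iio, Measure.restrict_restrict measurableSet_Iio]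
  rw [show Iio s ∩ Ioi 0 = Ioo 0 s from by ext r; simp [mem_Ioo, and_comm]]
  exact aux_Ioo hN hb hs

lemma lintegral_rpow_compl_ball (hN : 1 ≤ N) {b s : ℝ} (hb : b < -(N:ℝ)) (hs : 0 < s) :
    ∫⁻ y in (ball (0:E) s)ᶜ, ENNReal.ofReal (‖y‖ ^ b) =
      (N : ℝ≥0∞) * volume (ball (0:E) 1) * ENNReal.ofReal (s ^ ((N:ℝ) + b) / (-((N:ℝ) + b))) := by
  have hc : ((N:ℝ) - 1) + b < -1 := by linarith
  have hcast : (((N-1 : ℕ)) : ℝ) = (N:ℝ) - 1 := by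
    rw [Nat.cast_sub hN]; norm_num
  have hmg : Measurable (fun r : ℝ => ENNReal.ofReal (r ^ b)) := by fun_prop
  have hmf : Measurable ((Ici s).indicator (fun r : ℝ => ENNReal.ofReal (r ^ b))) :=
    hmg.indicator measurableSet_Ici
  rw [← lintegral_indicator measurableSet_ball.compl]
  have h1 : ∀ y : E, ((ball (0:E) s)ᶜ).indicator (fun y => ENNReal.ofReal (‖y‖ ^ b)) y
      = (Ici s).indicator (fun r : ℝ => ENNReal.ofReal (r ^ b)) ‖y‖ := by
    intro y
    by_cases h : s ≤ ‖y‖ <;>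
      simp [indicator, mem_ball_zero_iff, h, not_lt.2, lt_of_not_ge, not_le.1]
  simp_rw [h1]
  rw [lintegral_fun_norm hN _ hmf]
  congr 1
  have h2 : ∀ r : ℝ, ENNReal.ofReal (r ^ (N-1)) * (Ici s).indicator
        (fun r : ℝ => ENNReal.ofReal (r ^ b)) r
      = (Ici s).indicator (fun r : ℝ => ENNReal.ofReal (r ^ (N-1)) * ENNReal.ofReal (r ^ b)) r := by
    intro r
    by_cases h : r ∈ Ici s <;> simp [indicator, h]
  simp_rw [h2]
  rw [lintegral_indicator measurableSet_Ici, Measure.restrict_restrict measurableSet_Ici]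
  rw [show Ici s ∩ Ioi 0 = Ici s from inter_eq_left.2 (fun r hr => lt_of_lt_of_le hs hr)]
  rw [Measure.restrict_congr_set (Ioi_ae_eq_Ici (μ := volume) (a := s)).symm]
  have h3 : ∀ r ∈ Ioi (0:ℝ), ENNReal.ofReal (r ^ (N-1)) * ENNReal.ofReal (r ^ b)
      = ENNReal.ofReal (r ^ (((N:ℝ) - 1) + b)) := by
    intro r hr
    rw [← ENNReal.ofReal_mul (pow_nonneg (le_of_lt hr) _)]
    congr 1
    rw [← Real.rpow_natCast r (N-1), hcast, ← Real.rpow_add hr]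
  rw [setLIntegral_congr_fun measurableSet_Ioi
    (fun r hr => h3 r (lt_trans hs hr))]
  rw [← ofReal_integral_eq_lintegral_ofReal (integrableOn_Ioi_rpow_of_lt hc hs) ?_]
  · rw [integral_Ioi_rpow_of_lt hc hs]
    congr 1
    rw [show ((N:ℝ) - 1) + b + 1 = (N:ℝ) + b from by ring, div_neg, neg_div]
  · filter_upwards [ae_restrict_mem measurableSet_Ioi] with r hr
    exact Real.rpow_nonneg (le_of_lt (lt_of_lt_of_le hs hr.le)) _

lemma lintegral_rpow_ball_center (hN : 1 ≤ N) {b s : ℝ} (hb : -(N:ℝ) < b) (hs : 0 < s) (x : E) :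
    ∫⁻ y in ball x s, ENNReal.ofReal (‖x - y‖ ^ b) =
      (N : ℝ≥0∞) * volume (ball (0:E) 1) * ENNReal.ofReal (s ^ ((N:ℝ) + b) / ((N:ℝ) + b)) := by
  have hT : MeasurePreserving (fun y : E => x - y) volume volume :=
    Measure.measurePreserving_sub_left volume x
  have hemb : MeasurableEmbedding (fun y : E => x - y) :=
    (Homeomorph.subLeft x).measurableEmbedding
  have hpre : (fun y : E => x - y) ⁻¹' (ball (0:E) s) = ball x s := by
    ext y
    simp [mem_ball, dist_eq_norm, norm_sub_rev]
  rw [← hpre, hT.setLIntegral_comp_preimage_emb hemb (fun z => ENNReal.ofReal (‖z‖ ^ b))]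
  exact lintegral_rpow_ball hN hb hs

lemma riesz_key (hN : 3 ≤ N) (α θ τ : ℝ)
    (hα : α ∈ Set.Ioo (0:ℝ) (N:ℝ)) (hθ : α < θ) (hθ' : θ < (N:ℝ)) (hτ : (N:ℝ) < τ) :
    ∃ c : ℝ, 0 < c ∧ ∀ x : E, x ≠ 0 →
      ∫⁻ y : E, ENNReal.ofReal (‖y‖ ^ (-θ) * (1 + ‖y‖) ^ (θ - τ)) *
          ENNReal.ofReal (‖x - y‖ ^ (α - (N:ℝ))) ≤
        ENNReal.ofReal (c * (‖x‖ ^ (α - θ) * (1 + ‖x‖) ^ (θ - (N:ℝ)))) := by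
  have hN1 : 1 ≤ N := le_trans (by norm_num) hN
  have hα0 : 0 < α := hα.1
  have hαN : α < (N:ℝ) := hα.2
  have hθ0 : 0 < θ := lt_trans hα0 hθ
  have hNθ : (0:ℝ) < (N:ℝ) - θ := by linarith
  have hτ0 : 0 < τ := by
    have : (0:ℝ) < (N:ℝ) := lt_trans hα0 hαN
    linarith
  set CNr : ℝ := (N:ℝ) * (volume (ball (0:E) 1)).toReal with hCNr
  have hCNr0 : 0 ≤ CNr := by positivity
  have hCN : (N : ℝ≥0∞) * volume (ball (0:E) 1) = ENNReal.ofReal CNr := by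
    rw [hCNr, ENNReal.ofReal_mul (by positivity), ENNReal.ofReal_natCast,
      ENNReal.ofReal_toReal measure_ball_lt_top.ne]
  set G : E → ℝ≥0∞ := fun y => ENNReal.ofReal (‖y‖ ^ (-θ) * (1 + ‖y‖) ^ (θ - τ)) with hGdef
  have hGm : Measurable G := by fun_prop
  -- pointwise bounds on G
  have hG1 : ∀ y : E, G y ≤ ENNReal.ofReal (‖y‖ ^ (-θ)) := by
    intro y
    apply ENNReal.ofReal_le_ofReal
    have h1 : (1 + ‖y‖) ^ (θ - τ) ≤ 1 :=
      Real.rpow_le_one_of_one_le_of_nonpos (by linarith [norm_nonneg y]) (by linarith)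
    nlinarith [Real.rpow_nonneg (norm_nonneg y) (-θ),
      Real.rpow_nonneg (by linarith [norm_nonneg y] : (0:ℝ) ≤ 1 + ‖y‖) (θ - τ)]
  have hG2 : ∀ y : E, 0 < ‖y‖ → G y ≤ ENNReal.ofReal (‖y‖ ^ (-τ)) := by
    intro y hy
    apply ENNReal.ofReal_le_ofReal
    have h1 : (1 + ‖y‖) ^ (θ - τ) ≤ ‖y‖ ^ (θ - τ) :=
      Real.rpow_le_rpow_of_nonpos hy (by linarith) (by linarith)
    calc ‖y‖ ^ (-θ) * (1 + ‖y‖) ^ (θ - τ) ≤ ‖y‖ ^ (-θ) * ‖y‖ ^ (θ - τ) :=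
          mul_le_mul_of_nonneg_left h1 (Real.rpow_nonneg (norm_nonneg y) _)
      _ = ‖y‖ ^ (-τ) := by rw [← Real.rpow_add hy]; ring_nf
  -- constants
  set K1 : ℝ := CNr * (2^((N:ℝ)-α)/((N:ℝ)-θ) + 2^θ/α + 4^((N:ℝ)-α)*2^(θ-α)/(θ-α)) with hK1
  set K2 : ℝ := CNr * (2^((N:ℝ)-α) * (1/((N:ℝ)-θ) + 1/(τ-(N:ℝ))) + 2^τ/α
    + 4^((N:ℝ)-α)*2^(τ-α)/(τ-α)) with hK2
  have hK10 : 0 ≤ K1 := by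
    apply mul_nonneg hCNr0
    apply add_nonneg (add_nonneg ?_ ?_) ?_
    · exact div_nonneg (Real.rpow_nonneg (by norm_num) _) hNθ.le
    · exact div_nonneg (Real.rpow_nonneg (by norm_num) _) hα0.le
    · exact div_nonneg (mul_nonneg (Real.rpow_nonneg (by norm_num) _)
        (Real.rpow_nonneg (by norm_num) _)) (by linarith)
  have hK20 : 0 ≤ K2 := by
    apply mul_nonneg hCNr0
    apply add_nonneg (add_nonneg ?_ ?_) ?_
    · apply mul_nonneg (Real.rpow_nonneg (by norm_num) _)
      apply add_nonneg (by positivity) ?_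
      exact div_nonneg (by norm_num) (by linarith)
    · exact div_nonneg (Real.rpow_nonneg (by norm_num) _) hα0.le
    · exact div_nonneg (mul_nonneg (Real.rpow_nonneg (by norm_num) _)
        (Real.rpow_nonneg (by norm_num) _)) (by linarith)
  refine ⟨(K1 + K2 + 1) * 2^((N:ℝ)-θ), by positivity, fun x hx => ?_⟩
  set c : ℝ := (K1 + K2 + 1) * 2^((N:ℝ)-θ) with hc
  have hc0 : 0 ≤ c := by
    rw [hc]
    exact mul_nonneg (by linarith) (Real.rpow_nonneg (by norm_num) _)
  set R : ℝ := ‖x‖ with hRdef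
  have hR : 0 < R := by rw [hRdef]; exact norm_pos_iff.2 hx
  set K : E → ℝ≥0∞ := fun y => ENNReal.ofReal (‖x - y‖ ^ (α - (N:ℝ))) with hKdef
  have hKm : Measurable K := by fun_prop
  set A : Set E := closedBall (0:E) (R/2) with hAdef
  set B : Set E := closedBall x (R/2) with hBdef
  have hAmeas : MeasurableSet A := measurableSet_closedBall
  have hBmeas : MeasurableSet B := measurableSet_closedBall
  have hhalf : ∀ e : ℝ, (R/2) ^ e = R ^ e * 2^(-e) := by
    intro e
    rw [Real.div_rpow hR.le (by norm_num), Real.rpow_neg (by norm_num)]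
    ring
  have h22 : (2:ℝ)^((N:ℝ)-θ) * 2^(θ-(N:ℝ)) = 1 := by
    rw [← Real.rpow_add (by norm_num)]; norm_num
  -- splitting
  have hsplit : ∫⁻ y : E, G y * K y = (∫⁻ y in A, G y * K y) +
      ((∫⁻ y in B ∩ Aᶜ, G y * K y) + ∫⁻ y in Bᶜ ∩ Aᶜ, G y * K y) := by
    rw [← lintegral_add_compl (fun y => G y * K y) hAmeas]
    congr 1
    rw [← lintegral_add_compl (μ := volume.restrict Aᶜ) (fun y => G y * K y) hBmeas,
      Measure.restrict_restrict hBmeas, Measure.restrict_restrict hBmeas.compl]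
  -- region A : kernel bound
  have hKA : ∀ y ∈ A, K y ≤ ENNReal.ofReal ((R/2) ^ (α - (N:ℝ))) := by
    intro y hy
    have h1 : ‖y‖ ≤ R/2 := mem_closedBall_zero_iff.1 hy
    have h2 : R/2 ≤ ‖x - y‖ := by
      have := norm_sub_norm_le x y
      rw [← hRdef] at this
      linarith
    exact ENNReal.ofReal_le_ofReal
      (Real.rpow_le_rpow_of_nonpos (by positivity) h2 (by linarith))
  have estA : ∫⁻ y in A, G y * K y ≤
      ENNReal.ofReal ((R/2)^(α-(N:ℝ))) * ∫⁻ y in A, G y := by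
    rw [← lintegral_const_mul _ hGm]
    apply setLIntegral_mono' hAmeas
    intro y hy
    calc G y * K y ≤ G y * ENNReal.ofReal ((R/2)^(α-(N:ℝ))) := mul_le_mul_right (hKA y hy) _
      _ = ENNReal.ofReal ((R/2)^(α-(N:ℝ))) * G y := mul_comm _ _
  -- region B, parametric
  have estB : ∀ σ : ℝ, (∀ y : E, R/2 < ‖y‖ → G y ≤ ENNReal.ofReal (‖y‖ ^ σ)) → σ ≤ 0 →
      ∫⁻ y in B ∩ Aᶜ, G y * K y ≤ ENNReal.ofReal ((R/2)^σ * (CNr * (R^α/α))) := by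
    intro σ hσbound hσ0
    have h1 : ∀ y ∈ B ∩ Aᶜ, G y * K y ≤ ENNReal.ofReal ((R/2)^σ) * K y := by
      intro y hy
      have hy2 : R/2 < ‖y‖ := not_le.1 (fun h => hy.2 (mem_closedBall_zero_iff.2 h))
      apply mul_le_mul_left
      calc G y ≤ ENNReal.ofReal (‖y‖^σ) := hσbound y hy2
        _ ≤ ENNReal.ofReal ((R/2)^σ) := ENNReal.ofReal_le_ofReal
            (Real.rpow_le_rpow_of_nonpos (by positivity) hy2.le hσ0)
    calc ∫⁻ y in B ∩ Aᶜ, G y * K y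
        ≤ ∫⁻ y in B ∩ Aᶜ, ENNReal.ofReal ((R/2)^σ) * K y :=
          setLIntegral_mono' (hBmeas.inter hAmeas.compl) h1
      _ ≤ ∫⁻ y in ball x R, ENNReal.ofReal ((R/2)^σ) * K y := by
          apply lintegral_mono_set
          exact inter_subset_left.trans (closedBall_subset_ball (by linarith))
      _ = ENNReal.ofReal ((R/2)^σ) * ∫⁻ y in ball x R, K y := lintegral_const_mul _ hKm
      _ = ENNReal.ofReal ((R/2)^σ * (CNr * (R^α/α))) := by
          rw [hKdef, lintegral_rpow_ball_center hN1 (by linarith : -(N:ℝ) < α - (N:ℝ)) hR x,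
            hCN, show (N:ℝ) + (α - (N:ℝ)) = α from by ring,
            ← ENNReal.ofReal_mul hCNr0, ← ENNReal.ofReal_mul (Real.rpow_nonneg (by positivity) _)]
  -- region C, parametric
  have estC : ∀ σ : ℝ, (∀ y : E, R/2 < ‖y‖ → G y ≤ ENNReal.ofReal (‖y‖ ^ σ)) → σ + α < 0 →
      ∫⁻ y in Bᶜ ∩ Aᶜ, G y * K y ≤
        ENNReal.ofReal (4^((N:ℝ)-α) * (CNr * ((R/2)^(σ+α)/(-(σ+α))))) := by
    intro σ hσbound hσα
    have h1 : ∀ y ∈ Bᶜ ∩ Aᶜ, G y * K y ≤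
        ENNReal.ofReal (4^((N:ℝ)-α)) * ENNReal.ofReal (‖y‖^(σ + (α-(N:ℝ)))) := by
      intro y hy
      have hy2 : R/2 < ‖y‖ := not_le.1 (fun h => hy.2 (mem_closedBall_zero_iff.2 h))
      have hy0 : 0 < ‖y‖ := lt_trans (by positivity) hy2
      have hy3 : R/2 < ‖x - y‖ := by
        have hnb : y ∉ B := hy.1
        have := not_le.1 (fun h => hnb (mem_closedBall.2 h))
        rw [dist_eq_norm, ← norm_sub_rev] at this
        exact this
      have hquarter : ‖y‖/4 ≤ ‖x - y‖ := by
        rcases le_or_gt ‖y‖ (2*R) with h | h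
        · linarith
        · have h2 : ‖y‖ - ‖x‖ ≤ ‖x - y‖ := by
            rw [norm_sub_rev]; exact norm_sub_norm_le y x
          rw [← hRdef] at h2
          linarith
      calc G y * K y ≤ ENNReal.ofReal (‖y‖^σ) * ENNReal.ofReal ((‖y‖/4)^(α-(N:ℝ))) :=
            mul_le_mul' (hσbound y hy2) (ENNReal.ofReal_le_ofReal
              (Real.rpow_le_rpow_of_nonpos (by positivity) hquarter (by linarith)))
        _ = ENNReal.ofReal (‖y‖^σ * (‖y‖/4)^(α-(N:ℝ))) :=
            (ENNReal.ofReal_mul (Real.rpow_nonneg (norm_nonneg y) σ)).symm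
        _ = ENNReal.ofReal (4^((N:ℝ)-α) * ‖y‖^(σ+(α-(N:ℝ)))) := by
            congr 1
            rw [Real.div_rpow (norm_nonneg y) (by norm_num), Real.rpow_add hy0,
              show ((N:ℝ)-α) = -(α-(N:ℝ)) from by ring, Real.rpow_neg (by norm_num : (0:ℝ) ≤ 4)]
            ring
        _ = ENNReal.ofReal (4^((N:ℝ)-α)) * ENNReal.ofReal (‖y‖^(σ+(α-(N:ℝ)))) :=
            ENNReal.ofReal_mul (Real.rpow_nonneg (by norm_num) _)
    calc ∫⁻ y in Bᶜ ∩ Aᶜ, G y * K y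
        ≤ ∫⁻ y in Bᶜ ∩ Aᶜ, ENNReal.ofReal (4^((N:ℝ)-α)) *
            ENNReal.ofReal (‖y‖^(σ + (α-(N:ℝ)))) :=
          setLIntegral_mono' (hBmeas.compl.inter hAmeas.compl) h1
      _ ≤ ∫⁻ y in (ball (0:E) (R/2))ᶜ, ENNReal.ofReal (4^((N:ℝ)-α)) *
            ENNReal.ofReal (‖y‖^(σ + (α-(N:ℝ)))) := by
          apply lintegral_mono_set
          exact inter_subset_right.trans (compl_subset_compl.2 ball_subset_closedBall)
      _ = ENNReal.ofReal (4^((N:ℝ)-α)) *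
            ∫⁻ y in (ball (0:E) (R/2))ᶜ, ENNReal.ofReal (‖y‖^(σ + (α-(N:ℝ)))) :=
          lintegral_const_mul _ (by fun_prop)
      _ = ENNReal.ofReal (4^((N:ℝ)-α) * (CNr * ((R/2)^(σ+α)/(-(σ+α))))) := by
          rw [lintegral_rpow_compl_ball hN1 (by linarith : σ + (α-(N:ℝ)) < -(N:ℝ)) (by positivity),
            hCN, show (N:ℝ) + (σ + (α - (N:ℝ))) = σ + α from by ring,
            ← ENNReal.ofReal_mul hCNr0, ← ENNReal.ofReal_mul (Real.rpow_nonneg (by norm_num) _)]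
  rw [hsplit]
  rcases le_total R 1 with hR1 | hR1
  · -- case R ≤ 1
    have hb1 : ∫⁻ y in A, G y * K y ≤
        ENNReal.ofReal ((R/2)^(α-(N:ℝ)) * (CNr * (R^((N:ℝ)-θ)/((N:ℝ)-θ)))) := by
      have hA_G : ∫⁻ y in A, G y ≤
          ENNReal.ofReal CNr * ENNReal.ofReal (R^((N:ℝ)-θ)/((N:ℝ)-θ)) := by
        calc ∫⁻ y in A, G y ≤ ∫⁻ y in ball (0:E) R, G y :=
              lintegral_mono_set (closedBall_subset_ball (by linarith))
          _ ≤ ∫⁻ y in ball (0:E) R, ENNReal.ofReal (‖y‖^(-θ)) := lintegral_mono hG1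
          _ = ENNReal.ofReal CNr * ENNReal.ofReal (R^((N:ℝ)-θ)/((N:ℝ)-θ)) := by
              rw [lintegral_rpow_ball hN1 (by linarith : -(N:ℝ) < -θ) hR, hCN,
                show (N:ℝ) + -θ = (N:ℝ) - θ from by ring]
      calc ∫⁻ y in A, G y * K y ≤ ENNReal.ofReal ((R/2)^(α-(N:ℝ))) * ∫⁻ y in A, G y := estA
        _ ≤ ENNReal.ofReal ((R/2)^(α-(N:ℝ))) *
            (ENNReal.ofReal CNr * ENNReal.ofReal (R^((N:ℝ)-θ)/((N:ℝ)-θ))) :=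
            mul_le_mul_right hA_G _
        _ = ENNReal.ofReal ((R/2)^(α-(N:ℝ)) * (CNr * (R^((N:ℝ)-θ)/((N:ℝ)-θ)))) := by
            rw [← ENNReal.ofReal_mul hCNr0, ← ENNReal.ofReal_mul (Real.rpow_nonneg (by positivity) _)]
    have hb2 := estB (-θ) (fun y _ => hG1 y) (by linarith)
    have hb3 := estC (-θ) (fun y _ => hG1 y) (by linarith)
    -- nonnegativity of the three real constants
    have ha1 : 0 ≤ (R/2)^(α-(N:ℝ)) * (CNr * (R^((N:ℝ)-θ)/((N:ℝ)-θ))) :=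
      mul_nonneg (Real.rpow_nonneg (by positivity) _)
        (mul_nonneg hCNr0 (div_nonneg (Real.rpow_nonneg hR.le _) hNθ.le))
    have ha2 : 0 ≤ (R/2)^(-θ) * (CNr * (R^α/α)) :=
      mul_nonneg (Real.rpow_nonneg (by positivity) _)
        (mul_nonneg hCNr0 (div_nonneg (Real.rpow_nonneg hR.le _) hα0.le))
    have ha3 : 0 ≤ 4^((N:ℝ)-α) * (CNr * ((R/2)^(-θ+α)/(-(-θ+α)))) :=
      mul_nonneg (Real.rpow_nonneg (by norm_num) _)
        (mul_nonneg hCNr0 (div_nonneg (Real.rpow_nonneg (by positivity) _) (by linarith)))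
    calc (∫⁻ y in A, G y * K y) +
        ((∫⁻ y in B ∩ Aᶜ, G y * K y) + ∫⁻ y in Bᶜ ∩ Aᶜ, G y * K y)
        ≤ ENNReal.ofReal ((R/2)^(α-(N:ℝ)) * (CNr * (R^((N:ℝ)-θ)/((N:ℝ)-θ)))) +
          (ENNReal.ofReal ((R/2)^(-θ) * (CNr * (R^α/α))) +
           ENNReal.ofReal (4^((N:ℝ)-α) * (CNr * ((R/2)^(-θ+α)/(-(-θ+α)))))) :=
          add_le_add hb1 (add_le_add hb2 hb3)
      _ = ENNReal.ofReal ((R/2)^(α-(N:ℝ)) * (CNr * (R^((N:ℝ)-θ)/((N:ℝ)-θ))) +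
          ((R/2)^(-θ) * (CNr * (R^α/α)) +
           4^((N:ℝ)-α) * (CNr * ((R/2)^(-θ+α)/(-(-θ+α)))))) := by
          rw [← ENNReal.ofReal_add ha2 ha3, ← ENNReal.ofReal_add ha1 (add_nonneg ha2 ha3)]
      _ ≤ ENNReal.ofReal (c * (R ^ (α - θ) * (1 + R) ^ (θ - (N:ℝ)))) := by
          apply ENNReal.ofReal_le_ofReal
          have e1 : (R/2)^(α-(N:ℝ)) * (CNr * (R^((N:ℝ)-θ)/((N:ℝ)-θ)))
              = CNr * (2^((N:ℝ)-α)/((N:ℝ)-θ)) * R^(α-θ) := by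
            rw [hhalf (α-(N:ℝ)), show -(α-(N:ℝ)) = (N:ℝ)-α from by ring,
              show α-θ = (α-(N:ℝ)) + ((N:ℝ)-θ) from by ring, Real.rpow_add hR]
            ring
          have e2 : (R/2)^(-θ) * (CNr * (R^α/α)) = CNr * (2^θ/α) * R^(α-θ) := by
            rw [hhalf (-θ), show -(-θ) = θ from by ring,
              show α-θ = -θ+α from by ring, Real.rpow_add hR]
            ring
          have e3 : 4^((N:ℝ)-α) * (CNr * ((R/2)^(-θ+α)/(-(-θ+α))))
              = CNr * (4^((N:ℝ)-α)*2^(θ-α)/(θ-α)) * R^(α-θ) := by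
            rw [hhalf (-θ+α), show -(-θ+α) = θ-α from by ring,
              show α-θ = -θ+α from by ring]
            ring
          rw [e1, e2, e3]
          have hsum : CNr * (2^((N:ℝ)-α)/((N:ℝ)-θ)) * R^(α-θ) +
              (CNr * (2^θ/α) * R^(α-θ) + CNr * (4^((N:ℝ)-α)*2^(θ-α)/(θ-α)) * R^(α-θ))
              = K1 * R^(α-θ) := by rw [hK1]; ring
          rw [hsum]
          have hbase : (2:ℝ)^(θ-(N:ℝ)) ≤ (1+R)^(θ-(N:ℝ)) :=
            Real.rpow_le_rpow_of_nonpos (by linarith) (by linarith) (by linarith)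
          calc K1 * R^(α-θ) ≤ (K1+K2+1) * R^(α-θ) :=
                mul_le_mul_of_nonneg_right (by linarith) (Real.rpow_nonneg hR.le _)
            _ = c * (R^(α-θ) * 2^(θ-(N:ℝ))) := by
                rw [hc]; linear_combination (-(K1+K2+1) * R^(α-θ)) * h22
            _ ≤ c * (R^(α-θ) * (1+R)^(θ-(N:ℝ))) :=
                mul_le_mul_of_nonneg_left
                  (mul_le_mul_of_nonneg_left hbase (Real.rpow_nonneg hR.le _)) hc0
  · -- case 1 ≤ R
    have hσ2 : ∀ y : E, R/2 < ‖y‖ → G y ≤ ENNReal.ofReal (‖y‖ ^ (-τ)) :=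
      fun y hy => hG2 y (lt_trans (by positivity) hy)
    have hb1 : ∫⁻ y in A, G y * K y ≤
        ENNReal.ofReal ((R/2)^(α-(N:ℝ)) * (CNr * (1/((N:ℝ)-θ) + 1/(τ-(N:ℝ))))) := by
      have hMtot : ∫⁻ y in A, G y ≤
          ENNReal.ofReal CNr * ENNReal.ofReal (1/((N:ℝ)-θ) + 1/(τ-(N:ℝ))) := by
        calc ∫⁻ y in A, G y ≤ ∫⁻ y, G y := setLIntegral_le_lintegral _ _
          _ = (∫⁻ y in ball (0:E) 1, G y) + ∫⁻ y in (ball (0:E) 1)ᶜ, G y :=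
              (lintegral_add_compl G measurableSet_ball).symm
          _ ≤ ENNReal.ofReal CNr * ENNReal.ofReal (1^((N:ℝ)+(-θ))/((N:ℝ)+(-θ))) +
              ENNReal.ofReal CNr * ENNReal.ofReal (1^((N:ℝ)+(-τ))/(-((N:ℝ)+(-τ)))) := by
              apply add_le_add
              · calc ∫⁻ y in ball (0:E) 1, G y
                    ≤ ∫⁻ y in ball (0:E) 1, ENNReal.ofReal (‖y‖^(-θ)) := lintegral_mono hG1
                  _ = _ := by rw [lintegral_rpow_ball hN1 (by linarith) one_pos, hCN]
              · calc ∫⁻ y in (ball (0:E) 1)ᶜ, G y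
                    ≤ ∫⁻ y in (ball (0:E) 1)ᶜ, ENNReal.ofReal (‖y‖^(-τ)) := by
                      apply setLIntegral_mono' measurableSet_ball.compl
                      intro y hy
                      have h1 : (1:ℝ) ≤ ‖y‖ := not_lt.1 (fun h => hy (mem_ball_zero_iff.2 h))
                      exact hG2 y (by linarith)
                  _ = _ := by rw [lintegral_rpow_compl_ball hN1 (by linarith) one_pos, hCN]
          _ = ENNReal.ofReal CNr * ENNReal.ofReal (1/((N:ℝ)-θ) + 1/(τ-(N:ℝ))) := by
              rw [Real.one_rpow, Real.one_rpow, ← mul_add, ← ENNReal.ofReal_add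
                (div_nonneg one_pos.le (by linarith)) (div_nonneg one_pos.le (by linarith))]
              congr 2
              ring_nf
      calc ∫⁻ y in A, G y * K y ≤ ENNReal.ofReal ((R/2)^(α-(N:ℝ))) * ∫⁻ y in A, G y := estA
        _ ≤ ENNReal.ofReal ((R/2)^(α-(N:ℝ))) *
            (ENNReal.ofReal CNr * ENNReal.ofReal (1/((N:ℝ)-θ) + 1/(τ-(N:ℝ)))) :=
            mul_le_mul_right hMtot _
        _ = ENNReal.ofReal ((R/2)^(α-(N:ℝ)) * (CNr * (1/((N:ℝ)-θ) + 1/(τ-(N:ℝ))))) := by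
            rw [← ENNReal.ofReal_mul hCNr0,
              ← ENNReal.ofReal_mul (Real.rpow_nonneg (by positivity) _)]
    have hb2 := estB (-τ) hσ2 (by linarith)
    have hb3 := estC (-τ) hσ2 (by linarith)
    have ha1 : 0 ≤ (R/2)^(α-(N:ℝ)) * (CNr * (1/((N:ℝ)-θ) + 1/(τ-(N:ℝ)))) :=
      mul_nonneg (Real.rpow_nonneg (by positivity) _)
        (mul_nonneg hCNr0 (add_nonneg (div_nonneg one_pos.le hNθ.le)
          (div_nonneg one_pos.le (by linarith))))
    have ha2 : 0 ≤ (R/2)^(-τ) * (CNr * (R^α/α)) :=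
      mul_nonneg (Real.rpow_nonneg (by positivity) _)
        (mul_nonneg hCNr0 (div_nonneg (Real.rpow_nonneg hR.le _) hα0.le))
    have ha3 : 0 ≤ 4^((N:ℝ)-α) * (CNr * ((R/2)^(-τ+α)/(-(-τ+α)))) :=
      mul_nonneg (Real.rpow_nonneg (by norm_num) _)
        (mul_nonneg hCNr0 (div_nonneg (Real.rpow_nonneg (by positivity) _) (by linarith)))
    calc (∫⁻ y in A, G y * K y) +
        ((∫⁻ y in B ∩ Aᶜ, G y * K y) + ∫⁻ y in Bᶜ ∩ Aᶜ, G y * K y)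
        ≤ ENNReal.ofReal ((R/2)^(α-(N:ℝ)) * (CNr * (1/((N:ℝ)-θ) + 1/(τ-(N:ℝ))))) +
          (ENNReal.ofReal ((R/2)^(-τ) * (CNr * (R^α/α))) +
           ENNReal.ofReal (4^((N:ℝ)-α) * (CNr * ((R/2)^(-τ+α)/(-(-τ+α)))))) :=
          add_le_add hb1 (add_le_add hb2 hb3)
      _ = ENNReal.ofReal ((R/2)^(α-(N:ℝ)) * (CNr * (1/((N:ℝ)-θ) + 1/(τ-(N:ℝ)))) +
          ((R/2)^(-τ) * (CNr * (R^α/α)) +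
           4^((N:ℝ)-α) * (CNr * ((R/2)^(-τ+α)/(-(-τ+α)))))) := by
          rw [← ENNReal.ofReal_add ha2 ha3, ← ENNReal.ofReal_add ha1 (add_nonneg ha2 ha3)]
      _ ≤ ENNReal.ofReal (c * (R ^ (α - θ) * (1 + R) ^ (θ - (N:ℝ)))) := by
          apply ENNReal.ofReal_le_ofReal
          have e1 : (R/2)^(α-(N:ℝ)) * (CNr * (1/((N:ℝ)-θ) + 1/(τ-(N:ℝ))))
              = CNr * (2^((N:ℝ)-α) * (1/((N:ℝ)-θ)+1/(τ-(N:ℝ)))) * R^(α-(N:ℝ)) := by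
            rw [hhalf (α-(N:ℝ)), show -(α-(N:ℝ)) = (N:ℝ)-α from by ring]
            ring
          have e2 : (R/2)^(-τ) * (CNr * (R^α/α)) = CNr * (2^τ/α) * R^(α-τ) := by
            rw [hhalf (-τ), show -(-τ) = τ from by ring,
              show α-τ = -τ+α from by ring, Real.rpow_add hR]
            ring
          have e3 : 4^((N:ℝ)-α) * (CNr * ((R/2)^(-τ+α)/(-(-τ+α))))
              = CNr * (4^((N:ℝ)-α)*2^(τ-α)/(τ-α)) * R^(α-τ) := by
            rw [hhalf (-τ+α), show -(-τ+α) = τ-α from by ring,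
              show α-τ = -τ+α from by ring]
            ring
          rw [e1, e2, e3]
          have hRτ : R^(α-τ) ≤ R^(α-(N:ℝ)) :=
            Real.rpow_le_rpow_of_exponent_le hR1 (by linarith)
          have hX2 : 0 ≤ CNr * (2^τ/α) :=
            mul_nonneg hCNr0 (div_nonneg (Real.rpow_nonneg (by norm_num) _) hα0.le)
          have hX3 : 0 ≤ CNr * (4^((N:ℝ)-α)*2^(τ-α)/(τ-α)) :=
            mul_nonneg hCNr0 (div_nonneg (mul_nonneg (Real.rpow_nonneg (by norm_num) _)
              (Real.rpow_nonneg (by norm_num) _)) (by linarith))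
          have hsum : CNr * (2^((N:ℝ)-α) * (1/((N:ℝ)-θ)+1/(τ-(N:ℝ)))) * R^(α-(N:ℝ)) +
              (CNr * (2^τ/α) * R^(α-τ) + CNr * (4^((N:ℝ)-α)*2^(τ-α)/(τ-α)) * R^(α-τ))
              ≤ K2 * R^(α-(N:ℝ)) := by
            have s2 : CNr * (2^τ/α) * R^(α-τ) ≤ CNr * (2^τ/α) * R^(α-(N:ℝ)) :=
              mul_le_mul_of_nonneg_left hRτ hX2
            have s3 : CNr * (4^((N:ℝ)-α)*2^(τ-α)/(τ-α)) * R^(α-τ) ≤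
                CNr * (4^((N:ℝ)-α)*2^(τ-α)/(τ-α)) * R^(α-(N:ℝ)) :=
              mul_le_mul_of_nonneg_left hRτ hX3
            have hexp : K2 * R^(α-(N:ℝ)) =
                CNr * (2^((N:ℝ)-α) * (1/((N:ℝ)-θ)+1/(τ-(N:ℝ)))) * R^(α-(N:ℝ)) +
                (CNr * (2^τ/α) * R^(α-(N:ℝ)) +
                 CNr * (4^((N:ℝ)-α)*2^(τ-α)/(τ-α)) * R^(α-(N:ℝ))) := by
              rw [hK2]; ring
            linarith
          apply le_trans hsum
          have hbase2 : (2:ℝ)^(θ-(N:ℝ)) * R^(θ-(N:ℝ)) ≤ (1+R)^(θ-(N:ℝ)) := by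
            rw [← Real.mul_rpow (by norm_num) hR.le]
            exact Real.rpow_le_rpow_of_nonpos (by linarith) (by linarith) (by linarith)
          calc K2 * R^(α-(N:ℝ)) ≤ (K1+K2+1) * R^(α-(N:ℝ)) :=
                mul_le_mul_of_nonneg_right (by linarith) (Real.rpow_nonneg hR.le _)
            _ = c * (R^(α-θ) * (2^(θ-(N:ℝ)) * R^(θ-(N:ℝ)))) := by
                rw [show R^(α-θ) * ((2:ℝ)^(θ-(N:ℝ)) * R^(θ-(N:ℝ)))
                    = (2:ℝ)^(θ-(N:ℝ)) * (R^(α-θ) * R^(θ-(N:ℝ))) from by ring,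
                  ← Real.rpow_add hR, show α-θ+(θ-(N:ℝ)) = α-(N:ℝ) from by ring, hc]
                linear_combination (-(K1+K2+1) * R^(α-(N:ℝ))) * h22
            _ ≤ c * (R^(α-θ) * (1+R)^(θ-(N:ℝ))) :=
                mul_le_mul_of_nonneg_left
                  (mul_le_mul_of_nonneg_left hbase2 (Real.rpow_nonneg hR.le _)) hc0

end RieszAux

/-- The Euclidean Laplacian, as the sum of second directional derivatives along the
coordinate axes. -/
def lap {N : ℕ} (u : EuclideanSpace ℝ (Fin N) → ℝ) (x : EuclideanSpace ℝ (Fin N)) : ℝ :=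
  ∑ i : Fin N,
    fderiv ℝ (fun y => fderiv ℝ u y (EuclideanSpace.single i (1:ℝ))) x
      (EuclideanSpace.single i (1:ℝ))

/-- `f` is locally Hölder continuous on `s`. -/
def LocHolderOn {N : ℕ} (f : EuclideanSpace ℝ (Fin N) → ℝ)
    (s : Set (EuclideanSpace ℝ (Fin N))) : Prop :=
  ∀ x ∈ s, ∃ (C α : NNReal) (r : ℝ), 0 < r ∧ 0 < α ∧ α ≤ 1 ∧
    HolderOnWith C α f (Metric.ball x r ∩ s)

/-- The constant `c_p = ((2/(p-1))(N-2-2/(p-1)))^{1/(p-1)}`. -/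
def cp (N : ℕ) (p : ℝ) : ℝ := (2 / (p - 1) * ((N:ℝ) - 2 - 2 / (p - 1))) ^ (1 / (p - 1))

/-- The Joseph–Lundgren exponent `p_c = 1 + 4/(N-4+2√(N-1))`. -/
def pc (N : ℕ) : ℝ := 1 + 4 / ((N:ℝ) - 4 + 2 * Real.sqrt ((N:ℝ) - 1))

/-- The exponent `τ_p^*`. -/
def tauStar (N : ℕ) (p : ℝ) : ℝ :=
  (2 / (p - 1) - ((N:ℝ) - 2) / 2) -
    Real.sqrt ((2 / (p - 1) - ((N:ℝ) - 2) / 2) ^ 2 - 2 * ((N:ℝ) - 2 - 2 / (p - 1)))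

/-- The surface measure `σ_{N-1}` of the unit sphere in `ℝ^N`,
expressed as `N` times the volume of the unit ball. -/
def sphereArea (N : ℕ) : ℝ :=
  (N : ℝ) * (volume (Metric.ball (0 : EuclideanSpace ℝ (Fin N)) 1)).toReal

/-- The normalizing constant `c_N = 1/((N-2)σ_{N-1})` of the fundamental solution of `-Δ`. -/
def cGreen (N : ℕ) : ℝ := 1 / (((N:ℝ) - 2) * sphereArea N)

/-- `u` is a `ν`-fast decaying solution of `-Δ u = V u^p` in `ℝ^N \ {0}`. -/
def FastDecaySol (N : ℕ) (p : ℝ) (V u : EuclideanSpace ℝ (Fin N) → ℝ) (ν : ℝ) : Prop :=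
  ContDiffOn ℝ 2 u {0}ᶜ ∧ (∀ x : EuclideanSpace ℝ (Fin N), x ≠ 0 → 0 < u x) ∧
  (∀ x : EuclideanSpace ℝ (Fin N), x ≠ 0 → -lap u x = V x * u x ^ p) ∧
  Tendsto (fun x : EuclideanSpace ℝ (Fin N) => u x * ‖x‖ ^ ((N:ℝ) - 2))
    (Filter.comap (fun x => ‖x‖) Filter.atTop) (nhds ν)

/-- `u(x)|x|^{2/(p-1)} → c_p` as `x → 0`. -/
def SingAtOrigin (N : ℕ) (p : ℝ) (u : EuclideanSpace ℝ (Fin N) → ℝ) : Prop :=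
  Tendsto (fun x : EuclideanSpace ℝ (Fin N) => u x * ‖x‖ ^ (2 / (p - 1)))
    (nhdsWithin 0 {0}ᶜ) (nhds (cp N p))

/-- Condition `(V₀)` with parameters `c₀, τ₀, c_∞, β`. -/
def V0cond (N : ℕ) (V : EuclideanSpace ℝ (Fin N) → ℝ) (c₀ τ₀ cinf β : ℝ) : Prop :=
  LocHolderOn V {0}ᶜ ∧ 0 < c₀ ∧ 0 < τ₀ ∧
  (∀ x : EuclideanSpace ℝ (Fin N), x ≠ 0 → ‖x‖ ≤ 1 → |V x - 1| ≤ c₀ * ‖x‖ ^ τ₀) ∧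
  1 ≤ cinf ∧
  ∀ x : EuclideanSpace ℝ (Fin N), x ≠ 0 → 0 ≤ V x ∧ V x ≤ cinf * (1 + ‖x‖) ^ β

/-- Corollary 2.2, Riesz potential estimate. -/
theorem statement_7 (N : ℕ) (hN : 3 ≤ N) (α θ τ : ℝ)
    (hα : α ∈ Set.Ioo (0:ℝ) (N:ℝ)) (hθ : α < θ) (hθ' : θ < (N:ℝ)) (hτ : (N:ℝ) < τ)
    (f : EuclideanSpace ℝ (Fin N) → ℝ) (hf_meas : Measurable f)
    (hf_nonneg : ∀ x : EuclideanSpace ℝ (Fin N), x ≠ 0 → 0 ≤ f x)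
    (hf_bound : ∀ x : EuclideanSpace ℝ (Fin N), x ≠ 0 → f x ≤ ‖x‖ ^ (-θ) * (1 + ‖x‖) ^ (θ - τ)) :
    ∃ c : ℝ, 0 < c ∧ ∀ x : EuclideanSpace ℝ (Fin N), x ≠ 0 →
      ∫ y : EuclideanSpace ℝ (Fin N), f y * ‖x - y‖ ^ (α - (N:ℝ)) ≤
        c * (‖x‖ ^ (α - θ) * (1 + ‖x‖) ^ (θ - (N:ℝ))) := by
  obtain ⟨c, hc, hkey⟩ := riesz_key hN α θ τ hα hθ hθ' hτ
  refine ⟨c, hc, fun x hx => ?_⟩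
  haveI : Nontrivial (EuclideanSpace ℝ (Fin N)) := by
    have h1 : 0 < Module.finrank ℝ (EuclideanSpace ℝ (Fin N)) := by
      rw [finrank_E]; omega
    exact Module.nontrivial_of_finrank_pos (R := ℝ) h1
  have hae0 : ∀ᵐ y : EuclideanSpace ℝ (Fin N), y ≠ (0 : EuclideanSpace ℝ (Fin N)) := by
    have h := Set.Countable.ae_notMem (countable_singleton (0 : EuclideanSpace ℝ (Fin N))) volume
    simpa using h
  have hnn : 0 ≤ᵐ[volume] fun y : EuclideanSpace ℝ (Fin N) => f y * ‖x - y‖ ^ (α - (N:ℝ)) := by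
    filter_upwards [hae0] with y hy
    exact mul_nonneg (hf_nonneg y hy) (Real.rpow_nonneg (norm_nonneg _) _)
  have hm : AEStronglyMeasurable
      (fun y : EuclideanSpace ℝ (Fin N) => f y * ‖x - y‖ ^ (α - (N:ℝ))) volume := by
    apply Measurable.aestronglyMeasurable
    exact hf_meas.mul (by fun_prop)
  rw [integral_eq_lintegral_of_nonneg_ae hnn hm]
  have hRHS0 : 0 ≤ c * (‖x‖ ^ (α - θ) * (1 + ‖x‖) ^ (θ - (N:ℝ))) := by
    apply mul_nonneg hc.le
    exact mul_nonneg (Real.rpow_nonneg (norm_nonneg _) _)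
      (Real.rpow_nonneg (by positivity) _)
  apply ENNReal.toReal_le_of_le_ofReal hRHS0
  refine le_trans (lintegral_mono_ae ?_) (hkey x hx)
  filter_upwards [hae0] with y hy
  calc ENNReal.ofReal (f y * ‖x - y‖ ^ (α - (N:ℝ)))
      ≤ ENNReal.ofReal ((‖y‖ ^ (-θ) * (1 + ‖y‖) ^ (θ - τ)) * ‖x - y‖ ^ (α - (N:ℝ))) :=
        ENNReal.ofReal_le_ofReal
          (mul_le_mul_of_nonneg_right (hf_bound y hy) (Real.rpow_nonneg (norm_nonneg _) _))
    _ = ENNReal.ofReal (‖y‖ ^ (-θ) * (1 + ‖y‖) ^ (θ - τ)) *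
          ENNReal.ofReal (‖x - y‖ ^ (α - (N:ℝ))) :=
        ENNReal.ofReal_mul
          (mul_nonneg (Real.rpow_nonneg (norm_nonneg _) _)
            (Real.rpow_nonneg (by positivity) _))
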